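/- Let R be a discrete valuation domain with prime element p and let λ be an uncountable regular cardinal. Then every reduced torsion λ-pure projective R-module is complete in the p^λ-adic topology. -/

import Mathlib

universe u v w

open Ordinal

/-- The submodule `p^σ G`, defined by transfinite recursion. -/
noncomputable def pPow (R : Type u) [CommRing R] (p : R) (G : Type v) [AddCommGroup G]
    [Module R G] (σ : Ordinal.{w}) : Submodule R G :=
  Ordinal.limitRecOn σ ⊤ (fun _ N => N.map (LinearMap.lsmul R G p))
    (fun o _ ih => ⨅ ρ : Set.Iio o, ih ρ.1 ρ.2)


/-- `G` is (Hausdorff and) complete in the `p^λ`-adic topology: the canonical map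
`G → lim_{σ<λ} G/p^σ G` into the inverse limit is bijective. -/
def IsPLamComplete (R : Type u) [CommRing R] (p : R) (lam : Ordinal.{w}) (G : Type v)
    [AddCommGroup G] [Module R G] : Prop :=
  (∀ g : G, (∀ σ < lam, g ∈ pPow R p G σ) → g = 0) ∧
  ∀ x : (∀ σ : Set.Iio lam, G ⧸ pPow R p G σ.1),
    (∀ σ τ : Set.Iio lam, σ.1 ≤ τ.1 → ∀ g : G,
      Submodule.Quotient.mk g = x τ → Submodule.Quotient.mk g = x σ) →
    ∃ g : G, ∀ σ : Set.Iio lam, Submodule.Quotient.mk g = x σ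

/-- A module is `<κ`-presented if it admits a presentation with fewer than `κ` generators
and fewer than `κ` relations. -/
def IsLtPresented (R : Type u) [Ring R] (κ : Cardinal.{u}) (M : Type v) [AddCommGroup M]
    [Module R M] : Prop :=
  ∃ (ι : Type u) (f : (ι →₀ R) →ₗ[R] M) (s : Set (ι →₀ R)),
    Cardinal.mk ι < κ ∧ Function.Surjective f ∧ Cardinal.mk s < κ ∧
      Submodule.span R s = LinearMap.ker f

/-- A surjection `π : B → C` is a `κ`-pure epimorphism (equivalently, the short exact
sequence `0 → ker π → B → C → 0` is `κ`-pure) if every homomorphism from a `<κ`-presented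
module to `C` factors through `π`. -/
def IsPureEpi (R : Type u) [Ring R] (κ : Cardinal.{u}) {B : Type v} {C : Type w}
    [AddCommGroup B] [Module R B] [AddCommGroup C] [Module R C] (π : B →ₗ[R] C) : Prop :=
  ∀ (Y : Type u) [AddCommGroup Y] [Module R Y], IsLtPresented R κ Y →
    ∀ f : Y →ₗ[R] C, ∃ g : Y →ₗ[R] B, π ∘ₗ g = f

/-- A module is `κ`-pure projective if it is projective with respect to all `κ`-pure
short exact sequences. -/
def IsPureProjective (R : Type u) [Ring R] (κ : Cardinal.{u}) (M : Type v) [AddCommGroup M]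
    [Module R M] : Prop :=
  ∀ (B C : Type v) [AddCommGroup B] [Module R B] [AddCommGroup C] [Module R C]
    (π : B →ₗ[R] C), Function.Surjective π → IsPureEpi R κ π →
      ∀ f : M →ₗ[R] C, ∃ g : M →ₗ[R] B, π ∘ₗ g = f

/-- The `κ`-pure projective dimension of `M` is at least two: there is no `κ`-pure short
exact sequence `0 → P₁ → P₀ → M → 0` with `P₀` and `P₁` `κ`-pure projective. -/
def PureProjDimGE2 (R : Type u) [Ring R] (κ : Cardinal.{u}) (M : Type v) [AddCommGroup M]
    [Module R M] : Prop :=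
  ¬ ∃ (P : Type v) (_ : AddCommGroup P) (_ : Module R P) (π : P →ₗ[R] M),
      IsPureProjective R κ P ∧ Function.Surjective π ∧ IsPureEpi R κ π ∧
        IsPureProjective R κ ↥(LinearMap.ker π)

section Aux

variable (R : Type u) [CommRing R] (p : R) (G : Type v) [AddCommGroup G] [Module R G]

theorem pPow_zero : pPow R p G 0 = ⊤ := Ordinal.limitRecOn_zero ..

theorem pPow_succ (σ : Ordinal.{w}) :
    pPow R p G (σ + 1) = (pPow R p G σ).map (LinearMap.lsmul R G p) := by
  rw [pPow, pPow, Ordinal.add_one_eq_succ, Ordinal.limitRecOn_succ]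

theorem pPow_limit {o : Ordinal.{w}} (ho : Order.IsSuccLimit o) :
    pPow R p G o = ⨅ ρ : Set.Iio o, pPow R p G ρ.1 :=
  Ordinal.limitRecOn_limit _ _ _ _ ho

theorem pPow_succ_le (σ : Ordinal.{w}) : pPow R p G (σ + 1) ≤ pPow R p G σ := by
  rw [pPow_succ]
  rintro x ⟨y, hy, rfl⟩
  exact Submodule.smul_mem _ p hy

theorem pPow_anti : ∀ {σ τ : Ordinal.{w}}, σ ≤ τ → pPow R p G τ ≤ pPow R p G σ := by
  intro σ τ
  induction τ using Ordinal.limitRecOn with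
  | zero => intro h; rw [nonpos_iff_eq_zero.1 h]
  | add_one τ ih =>
    intro h
    rcases Order.le_succ_iff_eq_or_le.1 h with rfl | h
    · exact le_rfl
    · exact le_trans (pPow_succ_le R p G τ) (ih h)
  | limit o ho ih =>
    intro h
    rcases eq_or_lt_of_le h with rfl | h
    · exact le_rfl
    · rw [pPow_limit R p G ho]
      exact iInf_le_of_le ⟨σ, h⟩ le_rfl

theorem mem_pPow_limit {o : Ordinal.{w}} (ho : Order.IsSuccLimit o) {x : G} :
    x ∈ pPow R p G o ↔ ∀ ρ < o, x ∈ pPow R p G ρ := by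
  rw [pPow_limit R p G ho]
  constructor
  · intro h ρ hρ
    exact Submodule.mem_iInf _ |>.1 h ⟨ρ, hρ⟩
  · intro h
    exact Submodule.mem_iInf _ |>.2 fun ρ => h ρ.1 ρ.2

theorem pPow_map_le {H : Type*} [AddCommGroup H] [Module R H] (f : G →ₗ[R] H)
    (σ : Ordinal.{w}) : (pPow R p G σ).map f ≤ pPow R p H σ := by
  induction σ using Ordinal.limitRecOn with
  | zero =>
    rw [pPow_zero R p G, pPow_zero R p H]
    exact le_top
  | add_one σ ih =>
    rw [pPow_succ, pPow_succ]
    rintro x ⟨y, ⟨z, hz, rfl⟩, rfl⟩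
    exact ⟨f z, ih ⟨z, hz, rfl⟩, by simp⟩
  | limit o ho ih =>
    rintro x ⟨y, hy, rfl⟩
    rw [mem_pPow_limit R p H ho]
    intro ρ hρ
    exact ih ρ hρ ⟨y, (mem_pPow_limit R p G ho).1 hy ρ hρ, rfl⟩

/-- once the chain is constant at one successor step, it is constant forever after -/
theorem pPow_stab {τ : Ordinal.{w}} (hstab : pPow R p G (τ + 1) = pPow R p G τ) :
    ∀ σ, τ ≤ σ → pPow R p G σ = pPow R p G τ := by
  intro σ
  induction σ using Ordinal.induction with
  | h σ ih =>
    intro hτσ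
    rcases eq_or_lt_of_le hτσ with rfl | hlt
    · rfl
    rcases Ordinal.zero_or_succ_or_isSuccLimit σ with rfl | ⟨ρ, rfl⟩ | hl
    · exact absurd hlt (not_lt_of_ge (zero_le (a := τ)))
    · have hρ : τ ≤ ρ := Order.lt_succ_iff.1 ((Ordinal.add_one_eq_succ ρ) ▸ hlt)
      have h1 : pPow R p G ρ = pPow R p G τ := ih ρ (Order.lt_succ ρ) hρ
      rw [show Order.succ ρ = ρ + 1 from (Ordinal.add_one_eq_succ ρ).symm, pPow_succ, h1,
        ← pPow_succ, hstab]
    · rw [pPow_limit R p G hl]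
      apply le_antisymm
      · exact iInf_le_of_le ⟨τ, hlt⟩ le_rfl
      · refine le_iInf fun ρ => ?_
        rcases le_total ρ.1 τ with h | h
        · exact pPow_anti R p G h
        · rw [ih ρ.1 ρ.2 h]

theorem mem_pPow_succ {σ : Ordinal.{w}} {x : G} :
    x ∈ pPow R p G (σ + 1) ↔ ∃ y ∈ pPow R p G σ, p • y = x := by
  rw [pPow_succ]
  simp [Submodule.mem_map]

open DirectSum in
theorem mem_pPow_directSum {J : Type*} [DecidableEq J] (Y : J → Type*)
    [∀ j, AddCommGroup (Y j)] [∀ j, Module R (Y j)] (σ : Ordinal.{w}) (x : ⨁ j, Y j) :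
    x ∈ pPow R p (⨁ j, Y j) σ ↔ ∀ j, x j ∈ pPow R p (Y j) σ := by
  classical
  induction σ using Ordinal.limitRecOn generalizing x with
  | zero => simp [pPow_zero]
  | add_one σ ih =>
    constructor
    · rw [mem_pPow_succ]
      rintro ⟨y, hy, rfl⟩ j
      rw [mem_pPow_succ]
      exact ⟨y j, (ih y).1 hy j, rfl⟩
    · intro h
      choose z hz1 hz2 using fun j => (mem_pPow_succ R p (Y j)).1 (h j)
      set y : ⨁ j, Y j := DFinsupp.mk x.support
        (fun j => if hj : x j.1 = 0 then 0 else z j.1) with hy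
      have hyj : ∀ j, p • y j = x j := by
        intro j
        by_cases hj : x j = 0
        · have : y j = 0 := by
            rw [hy]
            by_cases hjs : j ∈ x.support
            · rw [DFinsupp.mk_apply, dif_pos hjs, dif_pos hj]
            · rw [DFinsupp.mk_apply, dif_neg hjs]
          rw [this, hj, smul_zero]
        · have hjs : j ∈ x.support := DFinsupp.mem_support_iff.2 hj
          have : y j = z j := by rw [hy, DFinsupp.mk_apply, dif_pos hjs, dif_neg hj]
          rw [this, hz2]
      rw [mem_pPow_succ]
      refine ⟨y, (ih y).2 fun j => ?_, ?_⟩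
      · by_cases hj : x j = 0
        · have : p • y j = 0 := by rw [hyj j, hj]
          by_cases hjs : j ∈ x.support
          · rw [hy, DFinsupp.mk_apply, dif_pos hjs, dif_pos hj]
            exact Submodule.zero_mem _
          · rw [hy, DFinsupp.mk_apply, dif_neg hjs]
            exact Submodule.zero_mem _
        · have hjs : j ∈ x.support := DFinsupp.mem_support_iff.2 hj
          rw [hy, DFinsupp.mk_apply, dif_pos hjs, dif_neg hj]
          exact hz1 j
      · exact DFinsupp.ext fun j => by rw [DFinsupp.smul_apply, hyj j]
  | limit o ho ih =>
    rw [mem_pPow_limit R p _ ho]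
    constructor
    · intro h j
      rw [mem_pPow_limit R p _ ho]
      intro ρ hρ
      exact (ih ρ hρ x).1 (h ρ hρ) j
    · intro h ρ hρ
      exact (ih ρ hρ x).2 fun j => (mem_pPow_limit R p _ ho).1 (h j) ρ hρ

section Artinian

variable [IsDomain R] [IsDiscreteValuationRing R]

/-- a cyclic module killed by `p` has only the trivial submodules -/
theorem cyclic_pkilled_submodule_eq (hp : Irreducible p) (g : G) (hg : Submodule.span R {g} = ⊤)
    (hkill : ∀ x : G, p • x = 0) (U : Submodule R G) : U = ⊥ ∨ U = ⊤ := by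
  by_cases hU : ∀ x ∈ U, x = (0 : G)
  · left
    exact le_antisymm (fun x hx => (Submodule.mem_bot R).2 (hU x hx)) bot_le
  · right
    push_neg at hU
    obtain ⟨x, hxU, hx0⟩ := hU
    have hxg : x ∈ Submodule.span R {g} := hg ▸ Submodule.mem_top
    obtain ⟨r, rfl⟩ := Submodule.mem_span_singleton.1 hxg
    rcases eq_or_ne r 0 with rfl | hr
    · exact absurd (zero_smul R g) hx0
    obtain ⟨n, u, rfl⟩ := IsDiscreteValuationRing.eq_unit_mul_pow_irreducible hr hp
    rcases Nat.eq_zero_or_pos n with rfl | hn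
    · -- unit: g ∈ U
      have hgU : g ∈ U := by
        have : (((u⁻¹ : Rˣ) : R) * ((u : R) * p ^ 0)) • g ∈ U := by
          rw [mul_smul]
          exact Submodule.smul_mem _ _ hxU
        simpa using this
      rw [eq_top_iff, ← hg]
      exact (Submodule.span_le (p := U)).2 (by simpa using hgU)
    · exfalso
      apply hx0
      obtain ⟨m, rfl⟩ := Nat.exists_eq_succ_of_ne_zero (Nat.pos_iff_ne_zero.1 hn)
      calc ((u : R) * p ^ (m + 1)) • g = ((u : R) * p ^ m) • (p • g) := by
              rw [← mul_smul, pow_succ]; ring_nf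
        _ = 0 := by rw [hkill g, smul_zero]

theorem isArtinian_of_cyclic_pkilled (hp : Irreducible p) (g : G) (hg : Submodule.span R {g} = ⊤)
    (hkill : ∀ x : G, p • x = 0) : IsArtinian R G := by
  constructor
  rw [RelEmbedding.wellFounded_iff_isEmpty]
  constructor
  intro f
  rcases cyclic_pkilled_submodule_eq R p G hp g hg hkill (f 0) with h0 | h0 <;>
    rcases cyclic_pkilled_submodule_eq R p G hp g hg hkill (f 1) with h1 | h1 <;>
      rcases cyclic_pkilled_submodule_eq R p G hp g hg hkill (f 2) with h2 | h2 <;>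
        [skip; skip; skip; skip; skip; skip; skip; skip] <;>
  · have h21 : f 2 < f 1 := f.map_rel_iff.2 (by norm_num)
    have h10 : f 1 < f 0 := f.map_rel_iff.2 (by norm_num)
    rw [h0, h1] at h10 <;> rw [h1, h2] at h21 <;> simp_all <;> exact absurd h21 (lt_irrefl _)

theorem span_coe_preimage_top {S : Set G} {N : Submodule R G} (hSN : S ⊆ ↑N)
    (hspan : Submodule.span R S = N) :
    Submodule.span R {x : ↥N | ↑x ∈ S} = ⊤ := by
  apply Submodule.map_injective_of_injective (N.injective_subtype)
  rw [Submodule.map_span, Submodule.map_top, Submodule.range_subtype]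
  have : N.subtype '' {x : ↥N | ↑x ∈ S} = S := by
    ext y
    constructor
    · rintro ⟨x, hx, rfl⟩
      exact hx
    · intro hy
      exact ⟨⟨y, hSN hy⟩, hy, rfl⟩
  rw [this, hspan]

theorem isArtinian_of_pkilled_span_finset (hp : Irreducible p) :
    ∀ (n : ℕ) (Q : Type v) [AddCommGroup Q] [Module R Q] (s : Finset Q),
      s.card = n → Submodule.span R (↑s : Set Q) = ⊤ → (∀ x : Q, p • x = 0) →
        IsArtinian R Q := by
  intro n
  induction n with
  | zero =>
    intro Q _ _ s hcard hspan _
    rw [Finset.card_eq_zero] at hcard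
    subst hcard
    have h0 : ∀ x : Q, x = 0 := by
      intro x
      have : x ∈ Submodule.span R (↑(∅ : Finset Q) : Set Q) := hspan ▸ Submodule.mem_top
      simpa [Submodule.span_empty] using this
    haveI : Subsingleton Q := ⟨fun a b => by rw [h0 a, h0 b]⟩
    haveI : Finite Q := Finite.of_subsingleton
    infer_instance
  | succ n ih =>
    intro Q _ _ s hcard hspan hkill
    classical
    obtain ⟨a, t, hat, hs, htc⟩ := Finset.card_eq_succ.1 hcard
    subst hs
    set Q' : Submodule R Q := Submodule.span R (↑t : Set Q) with hQ'
    have hsub : (↑t : Set Q) ⊆ ↑Q' := Submodule.subset_span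
    set s' : Finset ↥Q' := t.attach.map
      ⟨fun x => ⟨x.1, hsub x.2⟩, by intro x y hxy; apply Subtype.ext; exact congrArg (Subtype.val : ↥Q' → Q) hxy⟩ with hs'
    have hs'span : Submodule.span R (↑s' : Set ↥Q') = ⊤ := by
      have : (↑s' : Set ↥Q') = {x : ↥Q' | ↑x ∈ (↑t : Set Q)} := by
        ext x
        simp only [hs', Finset.coe_map, Finset.mem_coe, Set.mem_image, Set.mem_setOf_eq,
          Function.Embedding.coeFn_mk]
        constructor
        · rintro ⟨y, _, rfl⟩
          exact y.2
        · intro hx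
          exact ⟨⟨x.1, hx⟩, by simp, Subtype.ext rfl⟩
      rw [this]
      exact span_coe_preimage_top R Q hsub rfl
    haveI hA1 : IsArtinian R ↥Q' := by
      refine ih ↥Q' s' (by simp [hs', htc]) hs'span ?_
      intro x
      exact Subtype.ext (by simpa using hkill x.1)
    -- Artinian for Q ⧸ Q'
    haveI hA2 : IsArtinian R (Q ⧸ Q') := by
      have hkillq : ∀ x : Q ⧸ Q', p • x = 0 := by
        intro x
        obtain ⟨y, rfl⟩ := Submodule.Quotient.mk_surjective Q' x
        rw [← Submodule.Quotient.mk_smul, hkill y, Submodule.Quotient.mk_zero]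
      have hcyc : Submodule.span R {Submodule.Quotient.mk (p := Q') a} = ⊤ := by
        rw [eq_top_iff]
        rintro x -
        obtain ⟨y, rfl⟩ := Submodule.Quotient.mk_surjective Q' x
        have hy : y ∈ Submodule.span R (insert a (↑t : Set Q)) := by
          have : y ∈ Submodule.span R (↑(insert a t) : Set Q) := hspan ▸ Submodule.mem_top
          simpa using this
        obtain ⟨r, z, hz, rfl⟩ := Submodule.mem_span_insert.1 hy
        have : Submodule.Quotient.mk (p := Q') (r • a + z) =
            r • Submodule.Quotient.mk (p := Q') a := by
          rw [Submodule.Quotient.mk_add, Submodule.Quotient.mk_smul,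
            (Submodule.Quotient.mk_eq_zero Q').2 hz, add_zero]
        rw [this]
        exact Submodule.smul_mem _ _ (Submodule.mem_span_singleton_self _)
      exact isArtinian_of_cyclic_pkilled R p (Q ⧸ Q') hp _ hcyc hkillq
    exact isArtinian_of_range_eq_ker Q'.subtype Q'.mkQ
      (by rw [Submodule.range_subtype, Submodule.ker_mkQ])

theorem isArtinian_of_pkilled_pow (hp : Irreducible p) :
    ∀ (N : ℕ) (M : Type v) [AddCommGroup M] [Module R M], Module.Finite R M →
      (∀ x : M, p ^ N • x = 0) → IsArtinian R M := by
  intro N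
  induction N with
  | zero =>
    intro M _ _ _ hkill
    have h0 : ∀ x : M, x = 0 := fun x => by simpa using hkill x
    haveI : Subsingleton M := ⟨fun a b => by rw [h0 a, h0 b]⟩
    haveI : Finite M := Finite.of_subsingleton
    infer_instance
  | succ N ih =>
    intro M _ _ hfin hkill
    haveI : IsNoetherian R M := isNoetherian_of_isNoetherianRing_of_finite R M
    set P : Submodule R M := LinearMap.range (LinearMap.lsmul R M p) with hP
    haveI hA1 : IsArtinian R ↥P := by
      refine ih ↥P (Module.Finite.iff_fg.2 (IsNoetherian.noetherian P)) ?_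
      rintro ⟨x, y, rfl⟩
      refine Subtype.ext ?_
      show (p : R) ^ N • ((LinearMap.lsmul R M p) y) = 0
      rw [LinearMap.lsmul_apply, smul_smul, ← pow_succ]
      exact hkill y
    haveI hA2 : IsArtinian R (M ⧸ P) := by
      classical
      obtain ⟨sQ, hsQ⟩ := Module.Finite.fg_top (R := R) (M := M)
      have hkillq : ∀ x : M ⧸ P, p • x = 0 := by
        intro x
        obtain ⟨y, rfl⟩ := Submodule.Quotient.mk_surjective P x
        rw [← Submodule.Quotient.mk_smul]
        exact (Submodule.Quotient.mk_eq_zero P).2 ⟨y, rfl⟩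
      refine isArtinian_of_pkilled_span_finset R p hp (sQ.image ⇑P.mkQ).card
        (M ⧸ P) (sQ.image ⇑P.mkQ) rfl ?_ hkillq
      rw [Finset.coe_image, ← Submodule.map_span, hsQ, Submodule.map_top,
        Submodule.range_mkQ]
    exact isArtinian_of_range_eq_ker P.subtype P.mkQ
      (by rw [Submodule.range_subtype, Submodule.ker_mkQ])

end Artinian

section Seq

theorem exists_strictMono_nat_of_infinite {A : Set Ordinal.{w}} (hA : A.Infinite) :
    ∃ f : ℕ → Ordinal.{w}, StrictMono f ∧ ∀ n, f n ∈ A := by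
  classical
  let g : ℕ → Ordinal.{w} := fun n =>
    Nat.rec (sInf A) (fun _ prev => sInf (A ∩ Set.Ioi prev)) n
  have key : ∀ n, g n ∈ A ∧ (A ∩ Set.Iic (g n)).Finite ∧ g n < g (n + 1) := by
    have step : ∀ b : Ordinal.{w}, (A ∩ Set.Iic b).Finite →
        sInf (A ∩ Set.Ioi b) ∈ A ∩ Set.Ioi b ∧ (A ∩ Set.Iic (sInf (A ∩ Set.Ioi b))).Finite := by
      intro b hb
      have hne : (A ∩ Set.Ioi b).Nonempty := by
        by_contra hcon
        rw [Set.not_nonempty_iff_eq_empty] at hcon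
        apply hA
        have : A ⊆ (A ∩ Set.Iic b) ∪ (A ∩ Set.Ioi b) := by
          intro x hx
          rcases le_or_gt x b with h | h
          · exact Or.inl ⟨hx, h⟩
          · exact Or.inr ⟨hx, h⟩
        rw [hcon, Set.union_empty] at this
        exact hb.subset this
      have hmem := csInf_mem hne
      refine ⟨hmem, ?_⟩
      have : A ∩ Set.Iic (sInf (A ∩ Set.Ioi b)) ⊆ (A ∩ Set.Iic b) ∪ {sInf (A ∩ Set.Ioi b)} := by
        rintro x ⟨hxA, hxle⟩
        rcases le_or_gt x b with h | h
        · exact Or.inl ⟨hxA, h⟩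
        · right
          have : sInf (A ∩ Set.Ioi b) ≤ x := csInf_le (OrderBot.bddBelow _) ⟨hxA, h⟩
          exact le_antisymm hxle this
      exact ((hb.union (Set.finite_singleton _)).subset this)
    intro n
    induction n with
    | zero =>
      have h0 : g 0 ∈ A := csInf_mem hA.nonempty
      have h0f : (A ∩ Set.Iic (g 0)).Finite := by
        refine Set.Finite.subset (Set.finite_singleton (g 0)) ?_
        rintro x ⟨hxA, hxle⟩
        exact le_antisymm hxle (csInf_le (OrderBot.bddBelow _) hxA)
      obtain ⟨h1, _⟩ := step (g 0) h0f
      exact ⟨h0, h0f, h1.2⟩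
    | succ n ihn =>
      obtain ⟨_, hfin, _⟩ := ihn
      obtain ⟨hmem, hfin'⟩ := step (g n) hfin
      obtain ⟨hmem2, _⟩ := step (g (n + 1)) hfin'
      exact ⟨hmem.1, hfin', hmem2.2⟩
  exact ⟨g, strictMono_nat_of_lt_succ fun n => (key n).2.2, fun n => (key n).1⟩

end Seq

section Stab

variable [IsDomain R] [IsDiscreteValuationRing R]

theorem torsion_pow_smul (hp : Irreducible p) {T : Type v} [AddCommGroup T] [Module R T]
    (htor : Module.IsTorsion R T) (y : T) : ∃ n : ℕ, p ^ n • y = 0 := by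
  obtain ⟨⟨r, hr⟩, hry⟩ := @htor y
  have hr0 : r ≠ 0 := nonZeroDivisors.ne_zero hr
  obtain ⟨n, u, rfl⟩ := IsDiscreteValuationRing.eq_unit_mul_pow_irreducible hr0 hp
  refine ⟨n, ?_⟩
  have : (((u⁻¹ : Rˣ) : R) * ((u : R) * p ^ n)) • y = 0 := by
    rw [mul_smul]
    rw [show ((u : R) * p ^ n) • y = 0 from hry, smul_zero]
  simpa [← mul_assoc] using this

/-- the key stabilization lemma: the `pPow` chain of a torsion module with fewer than
`κ` generators stabilizes strictly below `κ.ord`. -/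
theorem pPow_stabilizes (hp : Irreducible p) (κ : Cardinal.{u}) (hreg : κ.IsRegular)
    (T : Type u) [AddCommGroup T] [Module R T] (htor : Module.IsTorsion R T)
    (S : Set T) (hspan : Submodule.span R S = ⊤) (hS : Cardinal.mk S < κ) :
    ∃ τ : Ordinal.{u}, τ < κ.ord ∧ ∀ σ, τ ≤ σ → pPow R p T σ = pPow R p T τ := by
  classical
  by_contra hcon
  push_neg at hcon
  have hstrict : ∀ τ : Ordinal.{u}, τ < κ.ord → pPow R p T (τ + 1) < pPow R p T τ := by
    intro τ hτ
    rcases lt_or_eq_of_le (pPow_succ_le R p T τ) with h | h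
    · exact h
    · obtain ⟨σ, hσ1, hσ2⟩ := hcon τ hτ
      exact absurd (pPow_stab R p T h σ hσ1) hσ2
  -- pick witnesses
  have hwit : ∀ τ : ↥(Set.Iio (κ.ord : Ordinal.{u})), ∃ x : T,
      x ∈ pPow R p T τ.1 ∧ x ∉ pPow R p T (τ.1 + 1) := by
    intro τ
    obtain ⟨x, hx1, hx2⟩ := SetLike.exists_of_lt (hstrict τ.1 τ.2)
    exact ⟨x, hx1, hx2⟩
  choose t ht1 ht2 using hwit
  -- finite support in the generators
  have hfs : ∀ τ : ↥(Set.Iio (κ.ord : Ordinal.{u})), ∃ F : Finset T,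
      ↑F ⊆ S ∧ t τ ∈ Submodule.span R (↑F : Set T) := by
    intro τ
    exact Submodule.mem_span_finite_of_mem_span (by rw [hspan]; trivial)
  choose F hF1 hF2 using hfs
  -- the map to finsets of S
  set Φ : ↥(Set.Iio (κ.ord : Ordinal.{u})) → ULift.{u+1} (Finset ↥S) :=
    fun τ => ULift.up ((F τ).subtype (· ∈ S)) with hΦ
  -- recovering the span
  have hrecover : ∀ τ, (↑(F τ) : Set T) = Subtype.val '' (((F τ).subtype (· ∈ S) : Finset ↥S) : Set ↥S) := by
    intro τ
    ext y
    constructor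
    · intro hy
      refine ⟨⟨y, hF1 τ hy⟩, ?_, rfl⟩
      rw [Finset.mem_coe, Finset.mem_subtype]
      exact hy
    · rintro ⟨z, hz, rfl⟩
      rw [Finset.mem_coe, Finset.mem_subtype] at hz
      exact hz
  -- case split on S finite or infinite
  have hInf : ∃ A : Set Ordinal.{u}, A.Infinite ∧ ∃ Fc : Finset ↥S,
      ∀ τ (h : τ ∈ A), ∃ hτ : τ < κ.ord, (F ⟨τ, hτ⟩).subtype (· ∈ S) = Fc := by
    cases finite_or_infinite ↥S with
    | inl hfin =>
      -- finitely many possible finsets altogether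
      haveI := Fintype.ofFinite ↥S
      haveI : Finite (ULift.{u+1} (Finset ↥S)) := inferInstance
      have homega : (Ordinal.omega0 : Ordinal.{u}) ≤ κ.ord := by
        rw [← Cardinal.ord_aleph0]
        exact Cardinal.ord_le_ord.2 hreg.aleph0_le
      haveI hinfdom : Infinite ↥(Set.Iio (κ.ord : Ordinal.{u})) := by
        refine Infinite.of_injective
          (fun n : ℕ => (⟨(n : Ordinal.{u}), lt_of_lt_of_le (Ordinal.nat_lt_omega0 n) homega⟩ :
            ↥(Set.Iio (κ.ord : Ordinal.{u})))) ?_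
        intro a b hab
        have : ((a : Ordinal.{u})) = (b : Ordinal.{u}) := congrArg Subtype.val hab
        exact_mod_cast this
      obtain ⟨Fc, hFc⟩ := Finite.exists_infinite_fiber Φ
      refine ⟨Subtype.val '' (Φ ⁻¹' {Fc}), ?_, Fc.down, ?_⟩
      · exact Set.Infinite.image (Set.injOn_of_injective Subtype.val_injective)
          (Set.infinite_coe_iff.1 hFc)
      · rintro τ ⟨⟨τ', hτ'⟩, hmem, rfl⟩
        refine ⟨hτ', ?_⟩
        have := hmem
        simp only [Set.mem_preimage, Set.mem_singleton_iff, hΦ] at this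
        exact congrArg ULift.down this
    | inr hinf =>
      have hcard : Cardinal.mk (ULift.{u+1} (Finset ↥S)) <
          Cardinal.mk ↥(Set.Iio (κ.ord : Ordinal.{u})) := by
        rw [Cardinal.mk_uLift, Cardinal.mk_finset_of_infinite, Ordinal.mk_Iio_ordinal,
          Cardinal.card_ord]
        exact Cardinal.lift_lt.2 hS
      obtain ⟨Fc, hFc⟩ := Cardinal.exists_infinite_fiber' Φ hcard
      refine ⟨Subtype.val '' (Φ ⁻¹' {Fc}), ?_, Fc.down, ?_⟩
      · exact Set.Infinite.image (Set.injOn_of_injective Subtype.val_injective)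
          (Set.infinite_coe_iff.1 hFc)
      · rintro τ ⟨⟨τ', hτ'⟩, hmem, rfl⟩
        refine ⟨hτ', ?_⟩
        have := hmem
        simp only [Set.mem_preimage, Set.mem_singleton_iff, hΦ] at this
        exact congrArg ULift.down this
  obtain ⟨A, hAinf, Fc, hA⟩ := hInf
  -- the finitely generated module
  set M₀ : Submodule R T := Submodule.span R ↑(Fc.image (Subtype.val : ↥S → T)) with hM₀
  have hMfg : M₀.FG := ⟨Fc.image Subtype.val, rfl⟩
  -- all relevant witnesses are in M₀
  have htM : ∀ τ (h : τ ∈ A) (hτ : τ < κ.ord), t ⟨τ, hτ⟩ ∈ M₀ := by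
    intro τ h hτ
    obtain ⟨hτ', hFeq⟩ := hA τ h
    have h1 : t ⟨τ, hτ⟩ ∈ Submodule.span R (↑(F ⟨τ, hτ⟩) : Set T) := hF2 _
    rw [hrecover ⟨τ, hτ⟩] at h1
    have : (F ⟨τ, hτ⟩).subtype (· ∈ S) = Fc := by
      have := hA τ h
      obtain ⟨hτ'', h2⟩ := this
      convert h2 using 2
    rw [this] at h1
    rw [hM₀, Finset.coe_image]
    exact h1
  -- M₀ is Artinian
  have hbound : ∃ N : ℕ, ∀ x ∈ M₀, p ^ N • x = 0 := by
    have hgen : ∀ y : T, ∃ n : ℕ, p ^ n • y = 0 := torsion_pow_smul R p hp htor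
    choose nexp hnexp using hgen
    refine ⟨(Fc.image (Subtype.val : ↥S → T)).sup nexp, ?_⟩
    intro x hx
    have : M₀ ≤ LinearMap.ker (LinearMap.lsmul R T (p ^ ((Fc.image (Subtype.val : ↥S → T)).sup nexp))) := by
      rw [hM₀, Submodule.span_le]
      intro y hy
      rw [SetLike.mem_coe, LinearMap.mem_ker, LinearMap.lsmul_apply]
      have hle : nexp y ≤ (Fc.image (Subtype.val : ↥S → T)).sup nexp := Finset.le_sup (by exact_mod_cast hy)
      calc p ^ (Fc.image (Subtype.val : ↥S → T)).sup nexp • y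
          = p ^ ((Fc.image (Subtype.val : ↥S → T)).sup nexp - nexp y) • p ^ nexp y • y := by
            rw [smul_smul, ← pow_add, Nat.sub_add_cancel hle]
        _ = 0 := by rw [hnexp y, smul_zero]
    have := this hx
    rwa [LinearMap.mem_ker, LinearMap.lsmul_apply] at this
  obtain ⟨N, hN⟩ := hbound
  haveI hart : IsArtinian R ↥M₀ := by
    refine isArtinian_of_pkilled_pow R p hp N ↥M₀ (Module.Finite.iff_fg.2 hMfg) ?_
    intro x
    exact Subtype.ext (by simpa using hN x.1 x.2)
  -- build the descending chain
  obtain ⟨f, hfmono, hfA⟩ := exists_strictMono_nat_of_infinite hAinf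
  have hfκ : ∀ n, f n < κ.ord := fun n => (hA (f n) (hfA n)).1
  set C : ℕ → Submodule R ↥M₀ := fun n =>
    (pPow R p T (f n) ⊓ M₀).comap M₀.subtype with hC
  have hdesc : ∀ n, C (n + 1) < C n := by
    intro n
    have hle : C (n + 1) ≤ C n := by
      apply Submodule.comap_mono
      exact inf_le_inf_right _ (pPow_anti R p T (le_of_lt (hfmono (Nat.lt_succ_self n))))
    have hsucc : f n + 1 ≤ f (n + 1) := by
      rw [Ordinal.add_one_eq_succ]
      exact Order.succ_le_of_lt (hfmono (Nat.lt_succ_self n))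
    refine lt_of_le_of_ne hle ?_
    intro heq
    have hx : (⟨t ⟨f n, hfκ n⟩, htM (f n) (hfA n) (hfκ n)⟩ : ↥M₀) ∈ C n := by
      simp only [hC, Submodule.mem_comap, Submodule.mem_inf, Submodule.subtype_apply]
      exact ⟨ht1 ⟨f n, hfκ n⟩, htM (f n) (hfA n) (hfκ n)⟩
    rw [← heq] at hx
    simp only [hC, Submodule.mem_comap, Submodule.mem_inf, Submodule.subtype_apply] at hx
    exact ht2 ⟨f n, hfκ n⟩ (pPow_anti R p T hsucc hx.1)
  -- contradiction with Artinian
  obtain ⟨m, ⟨n, rfl⟩, hmin⟩ := (wellFounded_lt (α := Submodule R ↥M₀)).has_min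
    (Set.range C) ⟨C 0, 0, rfl⟩
  exact hmin (C (n + 1)) ⟨n + 1, rfl⟩ (hdesc n)

end Stab

section Catalogue

open scoped DirectSum

open Classical in
/-- the catalogue of `<κ`-generated submodules of `G` -/
def Cat (R : Type u) [CommRing R] (κ : Cardinal.{u}) (G : Type u) [AddCommGroup G]
    [Module R G] : Type u :=
  {N : Submodule R G // ∃ S : Set G, N = Submodule.span R S ∧ Cardinal.mk S < κ}

variable (κ : Cardinal.{u}) (G' : Type u) [AddCommGroup G'] [Module R G']

open Classical in
/-- the canonical projection from the direct sum of the catalogue onto `G` -/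
noncomputable def catProj : (⨁ (j : Cat R κ G'), ↥j.1) →ₗ[R] G' :=
  DirectSum.toModule R _ G' fun j => j.1.subtype

theorem catProj_surjective (hκ : Cardinal.aleph0 ≤ κ) :
    Function.Surjective (catProj R κ G') := by
  classical
  intro g
  have hlt : Cardinal.mk ({g} : Set G') < κ := by
    rw [Cardinal.mk_singleton]
    exact lt_of_lt_of_le Cardinal.one_lt_aleph0 hκ
  set j : Cat R κ G' := ⟨Submodule.span R {g}, {g}, rfl, hlt⟩ with hj
  refine ⟨DirectSum.lof R (Cat R κ G') (fun j => ↥j.1) j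
    ⟨g, Submodule.mem_span_singleton_self g⟩, ?_⟩
  rw [catProj, DirectSum.toModule_lof]
  rfl

theorem catProj_pureEpi : IsPureEpi R κ (catProj R κ G') := by
  classical
  rintro Y _ _ ⟨ι, fY, sset, hι, hfY, -, -⟩ f
  set φ : (ι →₀ R) →ₗ[R] G' := f ∘ₗ fY with hφ
  have hrange : LinearMap.range φ = LinearMap.range f := by
    rw [hφ, LinearMap.range_comp, LinearMap.range_eq_top.2 hfY, Submodule.map_top]
  have hspan : LinearMap.range φ =
      Submodule.span R (⇑φ '' ((fun i => Finsupp.single i (1 : R)) '' Set.univ)) := by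
    rw [← Submodule.map_span, ← Finsupp.supported_eq_span_single, Finsupp.supported_univ,
      Submodule.map_top]
  have hcard : Cardinal.mk ↥(⇑φ '' ((fun i => Finsupp.single i (1 : R)) '' Set.univ)) < κ := by
    refine lt_of_le_of_lt (Cardinal.mk_image_le.trans
      (Cardinal.mk_image_le.trans (by rw [Cardinal.mk_univ]))) hι
  set j : Cat R κ G' := ⟨LinearMap.range f,
    ⇑φ '' ((fun i => Finsupp.single i (1 : R)) '' Set.univ),
    by rw [← hrange, hspan], hcard⟩ with hj
  refine ⟨(DirectSum.lof R (Cat R κ G') (fun j => ↥j.1) j) ∘ₗ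
    f.codRestrict j.1 (fun y => LinearMap.mem_range_self f y), ?_⟩
  ext y
  simp only [LinearMap.comp_apply]
  rw [catProj, DirectSum.toModule_lof]
  rfl

end Catalogue

open scoped DirectSum

end Aux

open scoped DirectSum

set_option maxHeartbeats 1000000 in
theorem stmt9 (R : Type u) [CommRing R] [IsDomain R] [IsDiscreteValuationRing R]
    (p : R) (hp : Irreducible p)
    (κ : Cardinal.{u}) (hreg : κ.IsRegular) (hunc : Cardinal.aleph0 < κ)
    (G : Type u) [AddCommGroup G] [Module R G]
    (htor : Module.IsTorsion R G)
    (hred : ∀ g : G, (∀ σ : Ordinal.{u}, g ∈ pPow R p G σ) → g = 0)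
    (hpp : IsPureProjective R κ G) :
    IsPLamComplete R p κ.ord G := by
  classical
  obtain ⟨s, hs⟩ := hpp (⨁ (j : Cat R κ G), ↥j.1) G (catProj R κ G)
    (catProj_surjective R κ G hreg.aleph0_le) (catProj_pureEpi R κ G) LinearMap.id
  have hπs : ∀ g : G, catProj R κ G (s g) = g := fun g => congrArg (fun F => F g) hs
  -- membership transfer
  have hmem : ∀ (σ : Ordinal.{u}) (g : G),
      g ∈ pPow R p G σ ↔ s g ∈ pPow R p (⨁ (j : Cat R κ G), ↥j.1) σ := by
    intro σ g
    constructor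
    · intro h
      exact pPow_map_le R p G s σ ⟨g, h, rfl⟩
    · intro h
      have := pPow_map_le R p (⨁ (j : Cat R κ G), ↥j.1) (catProj R κ G) σ ⟨s g, h, rfl⟩
      rwa [hπs g] at this
  -- stabilization for each component
  have hstab : ∀ j : Cat R κ G, ∃ τ : Ordinal.{u}, τ < κ.ord ∧
      ∀ σ, τ ≤ σ → pPow R p ↥j.1 σ = pPow R p ↥j.1 τ := by
    intro j
    obtain ⟨S, hSspan, hScard⟩ := j.2
    have hSN : S ⊆ ↑j.1 := by
      rw [hSspan]
      exact Submodule.subset_span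
    refine pPow_stabilizes R p hp κ hreg ↥j.1 ?_ {x : ↥j.1 | ↑x ∈ S}
      (span_coe_preimage_top R G hSN hSspan.symm) ?_
    · intro x
      obtain ⟨a, ha⟩ := @htor x.1
      exact ⟨a, Subtype.ext (by
        rw [show ((a • x : ↥j.1) : G) = a • (x : G) from rfl, ha]
        rfl)⟩
    · exact lt_of_le_of_lt (Cardinal.mk_preimage_of_injective Subtype.val S
        Subtype.val_injective) hScard
  choose τC hτC1 hτC2 using hstab
  constructor
  · -- Hausdorff part
    intro g hg
    refine hred g fun σ => ?_
    have hb : s g ∈ pPow R p (⨁ (j : Cat R κ G), ↥j.1) σ := by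
      rw [mem_pPow_directSum]
      intro j
      rcases lt_or_ge σ κ.ord with hσ | hσ
      · exact (mem_pPow_directSum R p _ σ (s g)).1 ((hmem σ g).1 (hg σ hσ)) j
      · rw [hτC2 j σ (le_trans (le_of_lt (hτC1 j)) hσ)]
        exact (mem_pPow_directSum R p _ (τC j) (s g)).1
          ((hmem (τC j) g).1 (hg (τC j) (hτC1 j))) j
    have := pPow_map_le R p (⨁ (j : Cat R κ G), ↥j.1) (catProj R κ G) σ ⟨s g, hb, rfl⟩
    rwa [hπs g] at this
  · -- completeness part
    intro x hcoh
    choose gg hgg using fun σ : ↥(Set.Iio (κ.ord : Ordinal.{u})) =>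
      Submodule.Quotient.mk_surjective _ (x σ)
    have hdiff : ∀ σ τ' : ↥(Set.Iio (κ.ord : Ordinal.{u})), σ.1 ≤ τ'.1 →
        gg τ' - gg σ ∈ pPow R p G σ.1 := by
      intro σ τ' h
      have h1 : Submodule.Quotient.mk (p := pPow R p G σ.1) (gg τ') = x σ :=
        hcoh σ τ' h (gg τ') (hgg τ')
      rw [← hgg σ] at h1
      exact (Submodule.Quotient.eq _).1 h1
    set b : ↥(Set.Iio (κ.ord : Ordinal.{u})) → (⨁ (j : Cat R κ G), ↥j.1) :=
      fun σ => s (gg σ) with hb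
    have hbd : ∀ σ τ' : ↥(Set.Iio (κ.ord : Ordinal.{u})), σ.1 ≤ τ'.1 → ∀ j : Cat R κ G,
        (b τ') j - (b σ) j ∈ pPow R p ↥j.1 σ.1 := by
      intro σ τ' h j
      have h1 : s (gg τ') - s (gg σ) ∈ pPow R p (⨁ (j : Cat R κ G), ↥j.1) σ.1 := by
        rw [← map_sub]
        exact (hmem σ.1 _).1 (hdiff σ τ' h)
      have h2 := (mem_pPow_directSum R p _ σ.1 _).1 h1 j
      rwa [DFinsupp.sub_apply] at h2
    set τj : (j : Cat R κ G) → ↥(Set.Iio (κ.ord : Ordinal.{u})) :=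
      fun j => ⟨τC j, hτC1 j⟩ with hτj
    set φ : (j : Cat R κ G) → ↥j.1 := fun j =>
      if (b (τj j)) j ∈ pPow R p ↥j.1 (τC j) then 0 else (b (τj j)) j with hφ
    have hsupp : {j : Cat R κ G | φ j ≠ 0}.Finite := by
      by_contra hinf
      have hinf2 : {j : Cat R κ G | φ j ≠ 0}.Infinite := hinf
      set e := hinf2.natEmbedding with he
      have hτs : (⨆ n : ℕ, τC (e n).1) < κ.ord := by
        refine Ordinal.iSup_lt_ord_lift (f := fun n : ℕ => τC (e n).1) ?_ (fun n => hτC1 (e n).1)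
        rw [Cardinal.mk_nat, Cardinal.lift_aleph0, hreg.cof_eq]
        exact hunc
      have hτsle : ∀ n : ℕ, τC (e n).1 ≤ ⨆ n : ℕ, τC (e n).1 := fun n =>
        Ordinal.le_iSup (fun n : ℕ => τC (e n).1) n
      set σs : ↥(Set.Iio (κ.ord : Ordinal.{u})) := ⟨_, hτs⟩ with hσs
      have hnonzero : ∀ n : ℕ, (b σs) (e n).1 ≠ 0 := by
        intro n
        have hne : φ (e n).1 ≠ 0 := (e n).2
        have hnin : (b (τj (e n).1)) (e n).1 ∉ pPow R p ↥((e n).1).1 (τC (e n).1) := by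
          intro hin
          apply hne
          simp only [hφ]
          rw [if_pos hin]
        intro h0
        apply hnin
        have hd := hbd (τj (e n).1) σs (hτsle n) (e n).1
        rw [h0, _root_.zero_sub] at hd
        simpa using (neg_mem_iff.1 hd)
      have : Set.range (fun n : ℕ => (e n).1) ⊆ ↑(DFinsupp.support (b σs)) := by
        rintro j ⟨n, rfl⟩
        rw [Finset.mem_coe, DFinsupp.mem_support_iff]
        exact hnonzero n
      have hrinf : (Set.range (fun n : ℕ => (e n).1)).Infinite := by
        apply Set.infinite_range_of_injective
        intro a b' hab
        exact e.injective (Subtype.ext hab)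
      exact hrinf ((DFinsupp.support (b σs)).finite_toSet.subset this)
    set c : ⨁ (j : Cat R κ G), ↥j.1 := DFinsupp.mk hsupp.toFinset (fun j => φ j.1) with hc
    have hcj : ∀ j : Cat R κ G, c j = φ j := by
      intro j
      by_cases hj : j ∈ hsupp.toFinset
      · rw [hc, DFinsupp.mk_apply, dif_pos hj]
      · rw [hc, DFinsupp.mk_apply, dif_neg hj]
        rw [Set.Finite.mem_toFinset, Set.mem_setOf_eq, not_not] at hj
        exact hj.symm
    refine ⟨catProj R κ G c, fun σ => ?_⟩
    rw [← hgg σ]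
    refine (Submodule.Quotient.eq _).2 ?_
    have hkey : c - b σ ∈ pPow R p (⨁ (j : Cat R κ G), ↥j.1) σ.1 := by
      rw [mem_pPow_directSum]
      intro j
      rw [DFinsupp.sub_apply, hcj j]
      set ρ : ↥(Set.Iio (κ.ord : Ordinal.{u})) :=
        ⟨max σ.1 (τC j), max_lt σ.2 (hτC1 j)⟩ with hρ
      have h1 : (b ρ) j - (b σ) j ∈ pPow R p ↥j.1 σ.1 := hbd σ ρ (le_max_left _ _) j
      have h2 : (b ρ) j - (b (τj j)) j ∈ pPow R p ↥j.1 (τC j) := hbd (τj j) ρ (le_max_right _ _) j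
      have hstable : pPow R p ↥j.1 (τC j) ≤ pPow R p ↥j.1 σ.1 := by
        rcases le_total σ.1 (τC j) with h | h
        · exact pPow_anti R p ↥j.1 h
        · rw [hτC2 j σ.1 h]
      by_cases hin : (b (τj j)) j ∈ pPow R p ↥j.1 (τC j)
      · simp only [hφ]
        rw [if_pos hin, _root_.zero_sub]
        refine neg_mem ?_
        have : (b σ) j = -((b ρ) j - (b σ) j) + ((b ρ) j - (b (τj j)) j) + (b (τj j)) j := by
          abel
        rw [this]
        exact add_mem (add_mem (neg_mem h1) (hstable h2)) (hstable hin)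
      · simp only [hφ]
        rw [if_neg hin]
        have : (b (τj j)) j - (b σ) j =
            -((b ρ) j - (b (τj j)) j) + ((b ρ) j - (b σ) j) := by abel
        rw [this]
        exact add_mem (neg_mem (hstable h2)) h1
    have hfin := pPow_map_le R p (⨁ (j : Cat R κ G), ↥j.1) (catProj R κ G) σ.1
      ⟨c - b σ, hkey, rfl⟩
    rw [map_sub] at hfin
    rwa [hb, hπs (gg σ)] at hfin
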